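/- For any N ≥ 1 and β ∈ ℝ, the constant vector (1)_{σ ∈ Sym(N)} is an eigenvector of the Cayley distance kernel matrix K(σ₁,σ₂) = e^{−β·d_C(σ₁,σ₂)}, with eigenvalue e^{−βN} ∏_{k=0}^{N−1}(e^β + k), which is strictly positive. -/

import Mathlib

open Equiv

/-- Number of cycles (orbits, including fixed points) of a permutation. -/
def numCycles {N : ℕ} (σ : Perm (Fin N)) : ℕ :=
  (Finset.univ.filter fun x => σ x = x).card + σ.cycleType.card

/-- Cayley distance on `Sym(N)`: `d_C(σ₁,σ₂) = N − #cycles(σ₁⁻¹∘σ₂)`. -/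
def cayleyDist {N : ℕ} (σ₁ σ₂ : Perm (Fin N)) : ℕ :=
  N - numCycles (σ₁⁻¹ * σ₂)

/-- The Cayley distance kernel at inverse temperature `β` on `Sym(N)`. -/
noncomputable def cayleyKernel (N : ℕ) (β : ℝ) :
    Matrix (Perm (Fin N)) (Perm (Fin N)) ℝ :=
  Matrix.of fun σ₁ σ₂ => Real.exp (-β * (cayleyDist σ₁ σ₂ : ℝ))

section Aux

open Equiv.Perm Finset

variable {α : Type*} [Fintype α] [DecidableEq α]

/-- General number of cycles (orbits) of a permutation of a finite type. -/
def nCyc (σ : Perm α) : ℕ :=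
  (Finset.univ.filter fun x => σ x = x).card + σ.cycleType.card

lemma numCycles_eq_nCyc {N : ℕ} (σ : Perm (Fin N)) : numCycles σ = nCyc σ := rfl

lemma isCycle_swap_mul_of_fixed {c : Perm α} (hc : c.IsCycle) {a b : α} (hab : a ≠ b)
    (ha : c a = a) (hb : c b ≠ b) : IsCycle (swap a b * c) := by
  have hmove : ∀ k : ℕ, c ((c ^ k) b) ≠ (c ^ k) b := by
    intro k h
    have h1 : c ((c ^ k) b) = (c ^ k) (c b) := by
      rw [← Equiv.Perm.mul_apply, ← Equiv.Perm.mul_apply, ← pow_succ, ← pow_succ']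
    rw [h1] at h
    exact hb ((c ^ k).injective h)
  have hne_a : ∀ k : ℕ, (c ^ k) b ≠ a := by
    intro k h
    exact hmove k (by rw [h, ha])
  have key0 : (swap a b * c).SameCycle a b :=
    ⟨1, by simp [ha]⟩
  have key : ∀ k : ℕ, (swap a b * c).SameCycle a ((c ^ k) b) := by
    intro k
    induction k with
    | zero => simpa using key0
    | succ k ih =>
      by_cases hcy : (c ^ (k + 1)) b = b
      · rw [hcy]; exact key0
      · have hstep : (swap a b * c) ((c ^ k) b) = (c ^ (k + 1)) b := by
          have h1 : c ((c ^ k) b) = (c ^ (k + 1)) b := by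
            rw [← Equiv.Perm.mul_apply, ← pow_succ']
          rw [Equiv.Perm.mul_apply, h1,
            Equiv.swap_apply_of_ne_of_ne (hne_a (k + 1)) hcy]
        exact ih.trans ⟨1, by simpa using hstep⟩
  refine ⟨a, ?_, ?_⟩
  · rw [Equiv.Perm.mul_apply, ha, Equiv.swap_apply_left]
    exact hab.symm
  · intro y hy
    rcases eq_or_ne y a with rfl | hya
    · exact Equiv.Perm.SameCycle.refl _ _
    have hcy : c y ≠ y := by
      intro h
      apply hy
      rw [Equiv.Perm.mul_apply, h]
      exact Equiv.swap_apply_of_ne_of_ne hya (fun hyb => hb (hyb ▸ h))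
    obtain ⟨k, hk⟩ := hc.exists_pow_eq hb hcy
    rw [← hk]
    exact key k

lemma nCyc_swap_mul {σ : Perm α} {a b : α} (hab : a ≠ b) (ha : σ a = a) :
    nCyc σ = nCyc (swap a b * σ) + 1 := by
  have hfix : (Finset.univ.filter fun x => (swap a b * σ) x = x)
      = (Finset.univ.filter fun x => σ x = x) \ {a, b} := by
    ext x
    simp only [Finset.mem_filter, Finset.mem_univ, true_and, Finset.mem_sdiff,
      Finset.mem_insert, Finset.mem_singleton]
    simp only [Equiv.Perm.mul_apply]
    constructor
    · intro h
      have hσa : σ x ≠ a := by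
        intro hh
        have hx : x = a := σ.injective (hh.trans ha.symm)
        rw [hx, ha, Equiv.swap_apply_left] at h
        exact hab h.symm
      have hσb : σ x ≠ b := by
        intro hh
        rw [hh, Equiv.swap_apply_right] at h
        subst h
        rw [ha] at hh
        exact hab hh
      rw [Equiv.swap_apply_of_ne_of_ne hσa hσb] at h
      refine ⟨h, ?_⟩
      rintro (rfl | rfl)
      · exact hσa h
      · exact hσb h
    · rintro ⟨h1, h2⟩
      push_neg at h2
      rw [h1, Equiv.swap_apply_of_ne_of_ne h2.1 h2.2]
  have hamem : a ∈ Finset.univ.filter fun x => σ x = x := by simp [ha]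
  by_cases hb : σ b = b
  · -- `swap a b` is disjoint from `σ`
    have hd : Equiv.Perm.Disjoint (swap a b) σ := by
      intro x
      rcases eq_or_ne x a with rfl | hxa
      · exact Or.inr ha
      rcases eq_or_ne x b with rfl | hxb
      · exact Or.inr hb
      · exact Or.inl (Equiv.swap_apply_of_ne_of_ne hxa hxb)
    have hct : (swap a b * σ).cycleType.card = σ.cycleType.card + 1 := by
      rw [hd.cycleType_mul, Multiset.card_add, (Equiv.Perm.isCycle_swap hab).cycleType]
      simp [add_comm]
    have hsub : ({a, b} : Finset α) ⊆ Finset.univ.filter fun x => σ x = x := by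
      intro x hx
      simp only [Finset.mem_insert, Finset.mem_singleton] at hx
      rcases hx with rfl | rfl
      · exact hamem
      · simp [hb]
    have hcard : (Finset.univ.filter fun x => (swap a b * σ) x = x).card
        = (Finset.univ.filter fun x => σ x = x).card - 2 := by
      rw [hfix, Finset.card_sdiff_of_subset hsub, Finset.card_insert_of_notMem (by simp [hab]),
        Finset.card_singleton]
    have h2 : 2 ≤ (Finset.univ.filter fun x => σ x = x).card := by
      have : ({a, b} : Finset α).card = 2 := by
        rw [Finset.card_insert_of_notMem (by simp [hab]), Finset.card_singleton]
      rw [← this]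
      exact Finset.card_le_card hsub
    unfold nCyc
    rw [hcard, hct]
    omega
  · -- `b` is moved by `σ`; peel off the cycle of `b`
    set c := σ.cycleOf b with hcdef
    have hmem : c ∈ σ.cycleFactorsFinset :=
      Equiv.Perm.cycleOf_mem_cycleFactorsFinset_iff.mpr (Equiv.Perm.mem_support.mpr hb)
    have hd : Equiv.Perm.Disjoint (σ * c⁻¹) c :=
      Equiv.Perm.disjoint_mul_inv_of_mem_cycleFactorsFinset hmem
    set d := σ * c⁻¹ with hddef
    have hσdc : d * c = σ := by rw [hddef, inv_mul_cancel_right]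
    have hcc : c.IsCycle := Equiv.Perm.isCycle_cycleOf σ hb
    have hca : c a = a := by
      rw [hcdef, Equiv.Perm.cycleOf_apply]
      split <;> simp [ha]
    have hcb : c b ≠ b := by rwa [hcdef, Equiv.Perm.cycleOf_apply_self]
    have hda : d a = a := by
      have hinv : c⁻¹ a = a := by
        rw [Equiv.Perm.inv_eq_iff_eq]; exact ha.symm ▸ hca.symm
      rw [hddef, Equiv.Perm.mul_apply, hinv, ha]
    have hdb : d b = b := (hd b).resolve_right hcb
    have hdd : Equiv.Perm.Disjoint (swap a b) d := by
      intro x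
      rcases eq_or_ne x a with rfl | hxa
      · exact Or.inr hda
      rcases eq_or_ne x b with rfl | hxb
      · exact Or.inr hdb
      · exact Or.inl (Equiv.swap_apply_of_ne_of_ne hxa hxb)
    have hcomm : swap a b * σ = d * (swap a b * c) :=
      calc swap a b * σ = swap a b * d * c := by rw [← hσdc]; exact (mul_assoc _ _ _).symm
        _ = d * swap a b * c := by rw [hdd.commute.eq]
        _ = d * (swap a b * c) := by rw [mul_assoc]
    have hd2 : Equiv.Perm.Disjoint d (swap a b * c) := by
      intro x
      rcases hd x with hx | hx
      · exact Or.inl hx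
      · rcases eq_or_ne x a with rfl | hxa
        · exact Or.inl hda
        have hxb : x ≠ b := fun h => hcb (h ▸ hx)
        right
        rw [Equiv.Perm.mul_apply, hx, Equiv.swap_apply_of_ne_of_ne hxa hxb]
    have hct : (swap a b * σ).cycleType.card = σ.cycleType.card := by
      rw [hcomm, hd2.cycleType_mul, ← hσdc, hd.cycleType_mul, Multiset.card_add, Multiset.card_add,
        (isCycle_swap_mul_of_fixed hcc hab hca hcb).cycleType, hcc.cycleType]
      simp
    have hbfix : b ∉ Finset.univ.filter fun x => σ x = x := by simp [hb]
    have hsd : (Finset.univ.filter fun x => σ x = x) \ {a, b}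
        = (Finset.univ.filter fun x => σ x = x) \ {a} := by
      ext x
      simp only [Finset.mem_sdiff, Finset.mem_insert, Finset.mem_singleton,
        Finset.mem_filter, Finset.mem_univ, true_and]
      constructor
      · rintro ⟨h1, h2⟩
        push_neg at h2
        exact ⟨h1, h2.1⟩
      · rintro ⟨h1, h2⟩
        refine ⟨h1, ?_⟩
        rintro (rfl | rfl)
        · exact h2 rfl
        · exact hb h1
    have hcard : (Finset.univ.filter fun x => (swap a b * σ) x = x).card
        = (Finset.univ.filter fun x => σ x = x).card - 1 := by
      rw [hfix, hsd, Finset.card_sdiff_of_subset (Finset.singleton_subset_iff.mpr hamem),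
        Finset.card_singleton]
    have hpos : 0 < (Finset.univ.filter fun x => σ x = x).card :=
      Finset.card_pos.mpr ⟨a, hamem⟩
    unfold nCyc
    rw [hcard, hct]
    omega

/-- `Fin n` is equivalent to the nonzero elements of `Fin (n+1)`. -/
def succEquiv (n : ℕ) : Fin n ≃ {x : Fin (n + 1) // x ≠ 0} where
  toFun i := ⟨i.succ, Fin.succ_ne_zero i⟩
  invFun x := (x : Fin (n + 1)).pred x.2
  left_inv i := by simp
  right_inv x := by simp

lemma decomposeFin_zero {n : ℕ} (e : Perm (Fin n)) :
    Equiv.Perm.decomposeFin.symm (0, e) = e.extendDomain (succEquiv n) := by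
  ext x
  refine Fin.cases ?_ (fun i => ?_) x
  · rw [Equiv.Perm.decomposeFin_symm_apply_zero,
      Equiv.Perm.extendDomain_apply_not_subtype _ _ (by simp)]
  · rw [Equiv.Perm.decomposeFin_symm_apply_succ]
    have h1 : e.extendDomain (succEquiv n) i.succ = (e i).succ :=
      Equiv.Perm.extendDomain_apply_image e (succEquiv n) i
    rw [h1]
    simp

lemma nCyc_decomposeFin_zero {n : ℕ} (e : Perm (Fin n)) :
    nCyc (Equiv.Perm.decomposeFin.symm (0, e)) = nCyc e + 1 := by
  rw [decomposeFin_zero]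
  unfold nCyc
  rw [Equiv.Perm.cycleType_extendDomain]
  have hfix : (Finset.univ.filter fun x => e.extendDomain (succEquiv n) x = x)
      = insert 0 ((Finset.univ.filter fun x => e x = x).image Fin.succ) := by
    ext x
    refine Fin.cases ?_ (fun i => ?_) x
    · simp [Equiv.Perm.extendDomain_apply_not_subtype _ (succEquiv n) (by simp : ¬(0 : Fin (n+1)) ≠ 0)]
    · have h1 : e.extendDomain (succEquiv n) i.succ = (e i).succ :=
        Equiv.Perm.extendDomain_apply_image e (succEquiv n) i
      simp only [Finset.mem_filter, Finset.mem_univ, true_and, Finset.mem_insert,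
        Finset.mem_image, h1, Fin.succ_inj]
      constructor
      · intro h; exact Or.inr ⟨i, by simpa using h, rfl⟩
      · rintro ((h : i.succ = 0) | ⟨j, hj, rfl⟩)
        · exact absurd h (Fin.succ_ne_zero i)
        · simpa using hj
  rw [hfix, Finset.card_insert_of_notMem (by simp [Fin.succ_ne_zero]),
    Finset.card_image_of_injective _ (Fin.succ_injective n)]
  omega

lemma decomposeFin_swap {n : ℕ} (p : Fin (n + 1)) (e : Perm (Fin n)) :
    Equiv.Perm.decomposeFin.symm (p, e) = swap 0 p * Equiv.Perm.decomposeFin.symm (0, e) := by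
  ext x
  refine Fin.cases ?_ (fun i => ?_) x
  · simp
  · rw [Equiv.Perm.mul_apply, Equiv.Perm.decomposeFin_symm_apply_succ,
      Equiv.Perm.decomposeFin_symm_apply_succ]
    simp

lemma nCyc_decomposeFin {n : ℕ} (p : Fin (n + 1)) (e : Perm (Fin n)) :
    nCyc (Equiv.Perm.decomposeFin.symm (p, e)) = nCyc e + if p = 0 then 1 else 0 := by
  rcases eq_or_ne p 0 with rfl | hp
  · rw [if_pos rfl]; exact nCyc_decomposeFin_zero e
  · rw [if_neg hp, decomposeFin_swap]
    have h0 : (Equiv.Perm.decomposeFin.symm (0, e) : Perm (Fin (n + 1))) 0 = 0 :=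
      Equiv.Perm.decomposeFin_symm_apply_zero 0 e
    have hM := nCyc_swap_mul (σ := Equiv.Perm.decomposeFin.symm (0, e)) (Ne.symm hp) h0
    rw [nCyc_decomposeFin_zero] at hM
    omega

lemma sum_pow_nCyc (n : ℕ) (x : ℝ) :
    ∑ σ : Perm (Fin n), x ^ nCyc σ = ∏ k ∈ Finset.range n, (x + (k : ℝ)) := by
  induction n with
  | zero =>
    rw [Finset.prod_range_zero]
    have h1 : ∀ σ : Perm (Fin 0), nCyc σ = 0 := by
      intro σ
      have : σ = 1 := Subsingleton.elim _ _
      subst this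
      simp [nCyc]
    simp only [h1, pow_zero]
    rw [Finset.sum_const, Finset.card_univ]
    simp
  | succ n ih =>
    rw [← Equiv.sum_comp (Equiv.Perm.decomposeFin (n := n)).symm (fun σ => x ^ nCyc σ),
      Fintype.sum_prod_type, Finset.sum_comm]
    have inner : ∀ e : Perm (Fin n),
        ∑ p : Fin (n + 1), x ^ nCyc (Equiv.Perm.decomposeFin.symm (p, e))
          = (x + n) * x ^ nCyc e := by
      intro e
      simp only [nCyc_decomposeFin]
      rw [Fin.sum_univ_succ]
      have h0 : ((0 : Fin (n + 1)) = 0) = True := by simp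
      simp only [h0, if_true, Fin.succ_ne_zero, if_false, add_zero]
      rw [Finset.sum_const, Finset.card_univ, Fintype.card_fin, pow_succ, nsmul_eq_mul]
      push_cast
      ring
    simp only [inner]
    rw [← Finset.mul_sum, ih, Finset.prod_range_succ]
    ring

lemma numCycles_le {N : ℕ} (σ : Perm (Fin N)) : numCycles σ ≤ N := by
  have hsupp : σ.support = Finset.univ.filter fun x => ¬σ x = x := by
    ext y; simp [Equiv.Perm.mem_support]
  have h1 : (Finset.univ.filter fun x => σ x = x).card + σ.support.card = N := by
    rw [hsupp, Finset.card_filter_add_card_filter_not, Finset.card_univ,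
      Fintype.card_fin]
  have h2 : σ.cycleType.card ≤ σ.support.card := by
    rw [← Equiv.Perm.sum_cycleType]
    have := Multiset.card_nsmul_le_sum (s := σ.cycleType) (a := 1)
      (fun y hy => Nat.one_le_iff_ne_zero.mpr (by
        have := Equiv.Perm.two_le_of_mem_cycleType hy; omega))
    simpa using this
  unfold numCycles
  omega

end Aux

/-- For any , the constant vector is an eigenvector of the Cayley distance
kernel with eigenvalue `e^{−βN} ∏_{k=0}^{N−1}(e^β + k)`, which is positive. -/
theorem const_eigenvector_cayleyKernel (N : ℕ) (hN : 1 ≤ N) (β : ℝ) :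
    (cayleyKernel N β).mulVec (fun _ => (1 : ℝ))
      = (Real.exp (-β * N) * ∏ k ∈ Finset.range N, (Real.exp β + (k : ℝ))) •
        (fun _ => (1 : ℝ)) ∧
    0 < Real.exp (-β * N) * ∏ k ∈ Finset.range N, (Real.exp β + (k : ℝ)) := by
  constructor
  · funext σ₁
    have key : ∀ σ : Perm (Fin N),
        cayleyKernel N β σ₁ (σ₁ * σ) = Real.exp (-β * N) * Real.exp β ^ numCycles σ := by
      intro σ
      unfold cayleyKernel cayleyDist
      rw [Matrix.of_apply, inv_mul_cancel_left, Nat.cast_sub (numCycles_le σ)]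
      rw [show -β * ((N : ℝ) - (numCycles σ : ℝ))
          = -β * N + (numCycles σ : ℝ) * β by ring,
        Real.exp_add, Real.exp_nat_mul]
    have hsum : ∑ σ₂ : Perm (Fin N), cayleyKernel N β σ₁ σ₂
        = Real.exp (-β * N) * ∏ k ∈ Finset.range N, (Real.exp β + (k : ℝ)) := by
      rw [← Equiv.sum_comp (Equiv.mulLeft σ₁) (fun σ₂ => cayleyKernel N β σ₁ σ₂)]
      simp only [Equiv.coe_mulLeft, key, numCycles_eq_nCyc]
      rw [← Finset.mul_sum, sum_pow_nCyc]
    simp only [Matrix.mulVec, dotProduct, mul_one, Pi.smul_apply, smul_eq_mul]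
    exact hsum
  · apply mul_pos (Real.exp_pos _)
    exact Finset.prod_pos fun k _ => by positivity
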